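/- Let G be a finite group of order g ≥ 2 with left regular representation R : G → Matrix G G ℝ, and let 𝒜 ⊆ (G → ℝ) be the set of all w such that there exist t ≥ 0 and q : G → ℝ with q ≥ 0 and ∑_h q(h) = 1 satisfying Matrix.exp(t • (∑_{h∈G} q(h) • R(h) − 1)) = ∑_{μ∈G} w(μ) • R(μ). Then 𝒜 has nonempty interior inside the affine hyperplane of weight vectors: there exist w₀ ∈ 𝒜 and ε > 0 such that every w : G → ℝ with ∑_μ w(μ) = 1 and ‖w − w₀‖ < ε (Euclidean norm on G → ℝ) belongs to 𝒜. In particular the set of accessible maps occupies a positive volume in the polytope formed by the convex hull of the group elements. -/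

import Mathlib

set_option linter.unusedSectionVars false
open NormedSpace
open scoped Nat
attribute [local instance] Matrix.linftyOpNormedAddCommGroup Matrix.linftyOpNormedRing Matrix.linftyOpNormedAlgebra

namespace AccessibleAux

variable {G : Type*} [Group G] [Fintype G] [DecidableEq G]

/-- convolution -/
noncomputable def conv (m m' : G → ℝ) : G → ℝ := fun g => ∑ h : G, m h * m' (h⁻¹ * g)

/-- the linear embedding of weight vectors into matrices -/
noncomputable def Lmap (R : G → Matrix G G ℝ) : (G → ℝ) →ₗ[ℝ] Matrix G G ℝ where
  toFun m := ∑ h : G, m h • R h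
  map_add' x y := by simp [add_smul, Finset.sum_add_distrib]
  map_smul' c x := by simp [smul_smul, Finset.smul_sum]

variable {R : G → Matrix G G ℝ} (hR : ∀ g a b : G, R g a b = if a = g * b then 1 else 0)

include hR

lemma Lmap_apply (m : G → ℝ) (a b : G) : Lmap R m a b = m (a * b⁻¹) := by
  have : ∀ h : G, (a = h * b) = (h = a * b⁻¹) := by
    intro h
    simp only [eq_iff_iff]
    constructor
    · rintro rfl; group
    · rintro rfl; group
  simp only [Lmap, LinearMap.coe_mk, AddHom.coe_mk, Matrix.sum_apply, Matrix.smul_apply,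
    hR, smul_eq_mul, this, mul_ite, mul_one, mul_zero]
  simp

lemma Lmap_mul (m m' : G → ℝ) : Lmap R m * Lmap R m' = Lmap R (conv m m') := by
  ext a b
  rw [Matrix.mul_apply, Lmap_apply hR, conv]
  simp only [Lmap_apply hR]
  apply Fintype.sum_equiv ⟨fun c => a * c⁻¹, fun h => h⁻¹ * a, fun c => by group, fun h => by group⟩
  intro c
  simp only [Equiv.coe_fn_mk]
  congr 1
  group

lemma Lmap_one : Lmap R (fun g => if g = 1 then 1 else 0) = 1 := by
  ext a b
  rw [Lmap_apply hR, Matrix.one_apply]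
  simp only [mul_inv_eq_one]

end AccessibleAux

namespace AccessibleAux

variable {G : Type*} [Group G] [Fintype G] [DecidableEq G]

lemma sum_conv (m m' : G → ℝ) : ∑ g : G, conv m m' g = (∑ g : G, m g) * ∑ g : G, m' g := by
  unfold conv
  rw [Finset.sum_comm, Finset.sum_mul]
  refine Finset.sum_congr rfl fun h _ => ?_
  rw [← Finset.mul_sum]
  congr 1
  exact Fintype.sum_equiv (Equiv.mulLeft h⁻¹) (fun x => m' (h⁻¹ * x)) m' (fun x => rfl)

end AccessibleAux

namespace AccessibleAux

variable {G : Type*} [Group G] [Fintype G] [DecidableEq G]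

noncomputable def iterConv (m : G → ℝ) : ℕ → (G → ℝ)
  | 0 => fun g => if g = 1 then 1 else 0
  | n + 1 => conv m (iterConv m n)

lemma sum_iterConv (m : G → ℝ) (n : ℕ) :
    ∑ g : G, iterConv m n g = (∑ g : G, m g) ^ n := by
  induction n with
  | zero => simp [iterConv, pow_zero]
  | succ n ih => rw [iterConv, sum_conv, ih, pow_succ]; ring

variable {R : G → Matrix G G ℝ} (hR : ∀ g a b : G, R g a b = if a = g * b then 1 else 0)
include hR

lemma Lmap_pow (m : G → ℝ) (n : ℕ) : (Lmap R m) ^ n = Lmap R (iterConv m n) := by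
  induction n with
  | zero => rw [pow_zero, iterConv, Lmap_one hR]
  | succ n ih => rw [pow_succ', ih, iterConv, ← Lmap_mul hR]

end AccessibleAux

namespace AccessibleAux

variable {G : Type*} [Group G] [Fintype G] [DecidableEq G]

/-- coordinate-recovery continuous linear map -/
noncomputable def Pmap (G : Type*) [Group G] [Fintype G] [DecidableEq G] :
    Matrix G G ℝ →L[ℝ] (G → ℝ) :=
  LinearMap.toContinuousLinearMap
    { toFun := fun M => fun g => M g 1
      map_add' := fun x y => rfl
      map_smul' := fun c x => rfl }

/-- row-sum continuous linear functional -/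
noncomputable def psi (G : Type*) [Group G] [Fintype G] [DecidableEq G] :
    Matrix G G ℝ →L[ℝ] ℝ :=
  LinearMap.toContinuousLinearMap
    { toFun := fun M => ∑ b : G, M 1 b
      map_add' := fun x y => by simp [Finset.sum_add_distrib]
      map_smul' := fun c x => by simp [Finset.mul_sum] }

variable {R : G → Matrix G G ℝ} (hR : ∀ g a b : G, R g a b = if a = g * b then 1 else 0)
include hR

lemma Pmap_Lmap (m : G → ℝ) : Pmap G (Lmap R m) = m := by
  funext g
  show Lmap R m g 1 = m g
  rw [Lmap_apply hR]
  simp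

lemma psi_Lmap (y : G → ℝ) : psi G (Lmap R y) = ∑ g : G, y g := by
  show ∑ b : G, Lmap R y 1 b = _
  simp only [Lmap_apply hR, one_mul]
  exact Fintype.sum_equiv (Equiv.inv G) _ _ (fun x => rfl)

lemma summable_iterConv (m : G → ℝ) :
    Summable (fun n : ℕ => (n !⁻¹ : ℝ) • iterConv m n) := by
  have hs := expSeries_summable' (𝕂 := ℝ) (Lmap R m)
  have h2 := hs.map (Pmap G) (Pmap G).continuous
  refine h2.congr fun n => ?_
  show Pmap G ((n !⁻¹ : ℝ) • (Lmap R) m ^ n) = _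
  rw [map_smul, Lmap_pow hR, Pmap_Lmap hR]

lemma exp_Lmap (m : G → ℝ) :
    exp (Lmap R m) = Lmap R (∑' n : ℕ, (n !⁻¹ : ℝ) • iterConv m n) := by
  rw [congrFun (exp_eq_tsum ℝ) (Lmap R m)]
  have : Lmap R (∑' n : ℕ, (n !⁻¹ : ℝ) • iterConv m n)
      = LinearMap.toContinuousLinearMap (Lmap R) (∑' n : ℕ, (n !⁻¹ : ℝ) • iterConv m n) := rfl
  rw [this, ContinuousLinearMap.map_tsum _ (summable_iterConv hR m)]
  refine tsum_congr fun n => ?_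
  rw [map_smul]
  show _ = (n !⁻¹ : ℝ) • Lmap R (iterConv m n)
  rw [← Lmap_pow hR]

lemma psi_exp_Lmap (m : G → ℝ) :
    psi G (exp (Lmap R m)) = Real.exp (∑ g : G, m g) := by
  rw [congrFun (exp_eq_tsum ℝ) (Lmap R m),
    ContinuousLinearMap.map_tsum (psi G) (expSeries_summable' (𝕂 := ℝ) (Lmap R m))]
  rw [Real.exp_eq_exp_ℝ, congrFun (exp_eq_tsum ℝ) (∑ g : G, m g)]
  refine tsum_congr fun n => ?_
  rw [map_smul, Lmap_pow hR, psi_Lmap hR, sum_iterConv, smul_eq_mul]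

end AccessibleAux

namespace AccessibleAux

variable {G : Type*} [Group G] [Fintype G] [DecidableEq G]
variable {R : G → Matrix G G ℝ} (hR : ∀ g a b : G, R g a b = if a = g * b then 1 else 0)
include hR

lemma mem_A (m w : G → ℝ) (hm0 : ∑ g : G, m g = 0) (hmpos : ∀ h : G, h ≠ 1 → 0 ≤ m h)
    (hw : exp (Lmap R m) = Lmap R w) :
    ∃ t : ℝ, 0 ≤ t ∧ ∃ q : G → ℝ,
      (∀ h : G, 0 ≤ q h) ∧ (∑ h : G, q h = 1) ∧
      exp (t • ((∑ h : G, q h • R h) - 1)) = ∑ μ : G, w μ • R μ := by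
  have hLq : ∀ q : G → ℝ, (∑ h : G, q h • R h) = Lmap R q := fun q => rfl
  have hLw : (∑ μ : G, w μ • R μ) = Lmap R w := rfl
  set t : ℝ := ∑ h ∈ Finset.univ.erase 1, m h with ht_def
  have ht : 0 ≤ t := Finset.sum_nonneg fun h hh => hmpos h (Finset.ne_of_mem_erase hh)
  have hsplit : t + m 1 = 0 := by
    rw [ht_def, Finset.sum_erase_add _ _ (Finset.mem_univ 1)]; exact hm0
  by_cases htz : t = 0
  · -- then m = 0
    have hm1 : m 1 = 0 := by linarith [hsplit]
    have hsum0 : ∑ h ∈ Finset.univ.erase 1, m h = 0 := by rw [← ht_def]; exact htz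
    have hme : ∀ h ∈ Finset.univ.erase 1, m h = 0 :=
      (Finset.sum_eq_zero_iff_of_nonneg
        (fun h hh => hmpos h (Finset.ne_of_mem_erase hh))).mp hsum0
    have hmz : m = 0 := by
      funext h
      by_cases hh : h = 1
      · rw [hh]; exact hm1
      · exact hme h (Finset.mem_erase.mpr ⟨hh, Finset.mem_univ h⟩)
    refine ⟨0, le_refl 0, fun h => if h = 1 then 1 else 0, fun h => by positivity, by simp, ?_⟩
    rw [zero_smul, exp_zero, hLw, ← hw, hmz, map_zero, exp_zero]
  · have htpos : 0 < t := lt_of_le_of_ne ht (Ne.symm htz)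
    refine ⟨t, ht, fun h => if h = 1 then 0 else m h / t, ?_, ?_, ?_⟩
    · intro h
      by_cases hh : h = 1
      · simp [hh]
      · simp only [hh, if_false]
        exact div_nonneg (hmpos h hh) ht
    · rw [← Finset.sum_erase_add _ _ (Finset.mem_univ 1), if_pos rfl, add_zero]
      rw [Finset.sum_congr rfl fun h hh => if_neg (Finset.ne_of_mem_erase hh)]
      rw [← Finset.sum_div, ← ht_def, div_self htz]
    · rw [hLq, hLw, ← hw, ← Lmap_one hR, ← map_sub, ← map_smul]
      congr 2
      funext h
      by_cases hh : h = 1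
      · subst hh
        simp only [Pi.smul_apply, Pi.sub_apply, smul_eq_mul]
        norm_num
        linarith [hsplit]
      · simp only [Pi.smul_apply, Pi.sub_apply, if_neg hh, smul_eq_mul, sub_zero]
        field_simp

end AccessibleAux

namespace AccessibleAux

variable {G : Type*} [Group G] [Fintype G] [DecidableEq G]
variable {R : G → Matrix G G ℝ} (hR : ∀ g a b : G, R g a b = if a = g * b then 1 else 0)
include hR

lemma exp_Lmap_self (m : G → ℝ) :
    exp (Lmap R m) = Lmap R (Pmap G (exp (Lmap R m))) := by
  rw [exp_Lmap hR m, Pmap_Lmap hR]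

lemma hasStrictFDerivAt_F :
    HasStrictFDerivAt (fun m : G → ℝ => Pmap G (exp (Lmap R m)))
      ((ContinuousLinearEquiv.refl ℝ (G → ℝ)) : (G → ℝ) →L[ℝ] (G → ℝ)) 0 := by
  set Lc : (G → ℝ) →L[ℝ] Matrix G G ℝ := LinearMap.toContinuousLinearMap (Lmap R) with hLc
  have hL : HasStrictFDerivAt (fun m : G → ℝ => Lmap R m) Lc 0 := Lc.hasStrictFDerivAt
  have hexp : HasStrictFDerivAt (exp)
      (1 : Matrix G G ℝ →L[ℝ] Matrix G G ℝ) (Lmap R 0) := by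
    rw [map_zero]; exact hasStrictFDerivAt_exp_zero
  have h1 := hexp.comp (0 : G → ℝ) hL
  have h2 := (Pmap G).hasStrictFDerivAt.comp (0 : G → ℝ) h1
  have heq : (Pmap G).comp ((1 : Matrix G G ℝ →L[ℝ] Matrix G G ℝ).comp Lc)
      = ((ContinuousLinearEquiv.refl ℝ (G → ℝ)) : (G → ℝ) →L[ℝ] (G → ℝ)) := by
    ext m
    simp only [ContinuousLinearMap.comp_apply, ContinuousLinearMap.one_apply,
      ContinuousLinearEquiv.coe_coe, ContinuousLinearEquiv.refl_apply]
    show Pmap G (Lc m) _ = m _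
    have : Lc m = Lmap R m := rfl
    rw [this, Pmap_Lmap hR m]
  rw [← heq]
  exact h2

end AccessibleAux

open AccessibleAux in
theorem accessible_maps_positive_volume
    {G : Type*} [Group G] [Fintype G] [DecidableEq G]
    (hg : 2 ≤ Fintype.card G)
    (R : G → Matrix G G ℝ)
    (hR : ∀ g a b : G, R g a b = if a = g * b then 1 else 0)
    (A : Set (G → ℝ))
    (hA : A = {w : G → ℝ | ∃ t : ℝ, 0 ≤ t ∧ ∃ q : G → ℝ,
      (∀ h : G, 0 ≤ q h) ∧ (∑ h : G, q h = 1) ∧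
      NormedSpace.exp (t • ((∑ h : G, q h • R h) - 1)) = ∑ μ : G, w μ • R μ}) :
    ∃ w₀ ∈ A, ∃ ε : ℝ, 0 < ε ∧
      ∀ w : EuclideanSpace ℝ G, (∑ μ : G, w μ = 1) →
        ‖w - (WithLp.toLp 2 w₀ : EuclideanSpace ℝ G)‖ < ε → (show G → ℝ from w) ∈ A := by
  subst hA
  set F : (G → ℝ) → (G → ℝ) := fun m => Pmap G (exp (Lmap R m)) with hFdef
  have hF := hasStrictFDerivAt_F hR
  set Φ := hF.toOpenPartialHomeomorph F with hΦdef
  have hΦcoe : ⇑Φ = F := hF.toOpenPartialHomeomorph_coe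
  have hs0 : (0 : G → ℝ) ∈ Φ.source := hF.mem_toOpenPartialHomeomorph_source
  -- choose a small positive multiple of the direction u inside the source
  obtain ⟨δ, hδpos, hball⟩ := Metric.isOpen_iff.mp Φ.open_source 0 hs0
  set u : G → ℝ := fun h => if h = 1 then -((Fintype.card G : ℝ) - 1) else 1 with hudef
  set s : ℝ := δ / (2 * (‖u‖ + 1)) with hsdef
  have hspos : 0 < s := by
    apply div_pos hδpos
    positivity
  set m₀ : G → ℝ := s • u with hm₀def
  have hm₀src : m₀ ∈ Φ.source := by
    apply hball
    rw [Metric.mem_ball, dist_zero_right, hm₀def, norm_smul, Real.norm_eq_abs,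
      abs_of_pos hspos]
    have hne : (‖u‖ + 1) ≠ 0 := by positivity
    have h2 : s * (‖u‖ + 1) = δ / 2 := by rw [hsdef]; field_simp
    calc s * ‖u‖ ≤ s * (‖u‖ + 1) := by nlinarith [norm_nonneg u]
      _ = δ / 2 := h2
      _ < δ := by linarith
  have hm₀pos : ∀ h : G, h ≠ 1 → 0 < m₀ h := by
    intro h hh
    rw [hm₀def, Pi.smul_apply, hudef]
    simp only [hh, if_false, smul_eq_mul, mul_one]
    exact hspos
  have husum : ∑ h : G, u h = 0 := by
    have hcard : ((Finset.univ.erase (1:G)).card : ℝ) = (Fintype.card G : ℝ) - 1 := by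
      rw [Finset.card_erase_of_mem (Finset.mem_univ 1), Finset.card_univ,
        Nat.cast_sub (by omega), Nat.cast_one]
    have h1 : u 1 = -((Fintype.card G : ℝ) - 1) := by rw [hudef]; simp
    have h2 : ∑ h ∈ Finset.univ.erase 1, u h = ((Finset.univ.erase (1:G)).card : ℝ) := by
      rw [Finset.sum_congr rfl (g := fun _ => (1:ℝ)) (fun h hh => by
        rw [hudef]; simp [Finset.ne_of_mem_erase hh]),
        Finset.sum_const, nsmul_eq_mul, mul_one]
    rw [← Finset.sum_erase_add _ _ (Finset.mem_univ (1 : G)), h1, h2, hcard]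
    ring
  have hm₀sum : ∑ h : G, m₀ h = 0 := by
    rw [hm₀def]
    simp only [Pi.smul_apply, smul_eq_mul, ← Finset.mul_sum, husum, mul_zero]
  set w₀ : G → ℝ := F m₀ with hw₀def
  -- exp (L m₀) = L w₀
  have hexpw₀ : exp (Lmap R m₀) = Lmap R w₀ := exp_Lmap_self hR m₀
  have hw₀A : w₀ ∈ {w : G → ℝ | ∃ t : ℝ, 0 ≤ t ∧ ∃ q : G → ℝ,
      (∀ h : G, 0 ≤ q h) ∧ (∑ h : G, q h = 1) ∧
      NormedSpace.exp (t • ((∑ h : G, q h • R h) - 1)) = ∑ μ : G, w μ • R μ} :=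
    mem_A hR m₀ w₀ hm₀sum (fun h hh => (hm₀pos h hh).le) hexpw₀
  refine ⟨w₀, hw₀A, ?_⟩
  -- neighborhood where inverse has positive off-identity coordinates
  have hw₀tgt : w₀ ∈ Φ.target := by
    rw [hw₀def, ← hΦcoe]
    exact Φ.map_source hm₀src
  have hsymm_w₀ : Φ.symm w₀ = m₀ := by
    rw [hw₀def, ← hΦcoe]
    exact Φ.left_inv hm₀src
  have hc : ContinuousAt Φ.symm w₀ := Φ.continuousAt_symm hw₀tgt
  set U : Set (G → ℝ) := {v | ∀ h : G, h ≠ 1 → 0 < v h} with hUdef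
  have hU : IsOpen U := by
    have : U = ⋂ h : G, {v : G → ℝ | h ≠ 1 → 0 < v h} := by
      ext v; simp [hUdef, Set.mem_iInter]
    rw [this]
    refine isOpen_iInter_of_finite fun h => ?_
    by_cases hh : h = 1
    · have : {v : G → ℝ | h ≠ 1 → 0 < v h} = Set.univ := by ext v; simp [hh]
      rw [this]; exact isOpen_univ
    · have : {v : G → ℝ | h ≠ 1 → 0 < v h} = (fun v : G → ℝ => v h) ⁻¹' Set.Ioi 0 := by
        ext v; simp [hh]
      rw [this]
      exact (continuous_apply h).isOpen_preimage _ isOpen_Ioi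
  have hm₀U : m₀ ∈ U := fun h hh => hm₀pos h hh
  have hN : Φ.target ∩ Φ.symm ⁻¹' U ∈ nhds w₀ := by
    refine Filter.inter_mem (Φ.open_target.mem_nhds hw₀tgt) ?_
    apply hc.preimage_mem_nhds
    apply hU.mem_nhds
    rw [hsymm_w₀]
    exact hm₀U
  -- transfer to the Euclidean space
  set ι : EuclideanSpace ℝ G → (G → ℝ) := fun w => (w : G → ℝ) with hιdef
  have hιcont : Continuous ι := by
    exact (PiLp.continuousLinearEquiv 2 ℝ (fun _ : G => ℝ)).continuous
  have hV : ι ⁻¹' (Φ.target ∩ Φ.symm ⁻¹' U) ∈ nhds (WithLp.toLp 2 w₀ : EuclideanSpace ℝ G) :=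
    hιcont.continuousAt.preimage_mem_nhds hN
  obtain ⟨ε, hεpos, hεball⟩ := Metric.mem_nhds_iff.mp hV
  refine ⟨ε, hεpos, ?_⟩
  intro w hwsum hwdist
  have hwmem : (show G → ℝ from w) ∈ Φ.target ∩ Φ.symm ⁻¹' U := by
    apply hεball
    rw [Metric.mem_ball, dist_eq_norm]
    exact hwdist
  obtain ⟨hwtgt, hwU⟩ := hwmem
  set m : G → ℝ := Φ.symm (show G → ℝ from w) with hmdef
  have hmsrc : m ∈ Φ.source := Φ.map_target hwtgt
  have hFm : F m = (show G → ℝ from w) := by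
    rw [← hΦcoe]
    exact Φ.right_inv hwtgt
  have hexpm : exp (Lmap R m) = Lmap R (show G → ℝ from w) := by
    rw [exp_Lmap_self hR m]
    exact congrArg (Lmap R) hFm
  have hmsum : ∑ g : G, m g = 0 := by
    have h1 : psi G (exp (Lmap R m)) = Real.exp (∑ g : G, m g) := psi_exp_Lmap hR m
    rw [hexpm, psi_Lmap hR] at h1
    have h2 : Real.exp (∑ g : G, m g) = 1 := by rw [← h1]; exact hwsum
    have h3 := congrArg Real.log h2
    rwa [Real.log_exp, Real.log_one] at h3
  exact mem_A hR m (show G → ℝ from w) hmsum (fun h hh => (hwU h hh).le) hexpm
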